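/- Let Y = X + V with X independent of V on ℝ^d, where the density f_V of V belongs to C_0^k(ℝ^d;ℝ) and φ_V is nonzero Lebesgue-a.e., and let g : ℝ^d → ℝ be measurable with ∫ |g| dP_X < ∞. Then the set U = {y ∈ ℝ^d : f_Y(y) > 0} is open, and the function y ↦ N_g(y)/f_Y(y), where N_g(y) = ∫ g(x) f_V(y − x) dP_X(x) and f_Y(y) = ∫ f_V(y − x) dP_X(x), is k-times continuously differentiable on U; this function is a version of the posterior mean y ↦ E[g(X) | Y = y]. -/

import Mathlib

open MeasureTheory Filter Topology

noncomputable section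

abbrev Ed (d : ℕ) := EuclideanSpace ℝ (Fin d)

/-- Integral of a complex-valued function against a finite signed measure,
via the Jordan decomposition. -/
def sInt {d : ℕ} (μ : SignedMeasure (Ed d)) (f : Ed d → ℂ) : ℂ :=
  (∫ x, f x ∂μ.toJordanDecomposition.posPart) -
    ∫ x, f x ∂μ.toJordanDecomposition.negPart

/-- Total variation norm of a finite signed measure. -/
def tvNorm {d : ℕ} (μ : SignedMeasure (Ed d)) : ℝ :=
  (μ.totalVariation Set.univ).toReal

/-- Convolution operator `K_V[μ](y) = ∫ f_V (y - x) dμ(x)`. -/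
def KV {d : ℕ} (fV : Ed d → ℝ) (μ : SignedMeasure (Ed d)) : Ed d → ℂ :=
  fun y => sInt μ fun x => (fV (y - x) : ℂ)

/-- The class of `V`-admissible mixtures `A_V = {f_V * μ : μ ∈ M(ℝ^d)}`. -/
def AV {d : ℕ} (fV : Ed d → ℝ) : Set (Ed d → ℂ) :=
  {f | ∃ μ : SignedMeasure (Ed d), f = KV fV μ}

/-- Characteristic function `φ_V(ω) = ∫ e^{i⟨ω,v⟩} f_V(v) dv` of a density. -/
def charFn {d : ℕ} (fV : Ed d → ℝ) (ω : Ed d) : ℂ :=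
  ∫ v, Complex.exp (Complex.I * ((inner ℝ ω v : ℝ) : ℂ)) * (fV v : ℂ)

/-- `f_V` is a probability density on `ℝ^d`. -/
def IsDensity {d : ℕ} (fV : Ed d → ℝ) : Prop :=
  Measurable fV ∧ (∀ v, 0 ≤ fV v) ∧ Integrable fV ∧ ∫ v, fV v = 1

open ProbabilityTheory

open ENNReal NNReal

set_option synthInstance.maxHeartbeats 1000000
set_option maxHeartbeats 4000000

lemma exists_bound_of_cocompact {α F : Type*} [TopologicalSpace α] [NormedAddCommGroup F]
    {f : α → F} (hf : Continuous f) (h : Tendsto (fun x => ‖f x‖) (cocompact α) (𝓝 0)) :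
    ∃ C, 0 ≤ C ∧ ∀ x, ‖f x‖ ≤ C := by
  have h1 : {x | ‖f x‖ < 1} ∈ cocompact α := h (Iio_mem_nhds one_pos)
  obtain ⟨K, hK, hKsub⟩ := hasBasis_cocompact.mem_iff.mp h1
  obtain ⟨C, hC⟩ := hK.exists_bound_of_continuousOn hf.norm.continuousOn
  refine ⟨max C 1, le_trans zero_le_one (le_max_right _ _), fun x => ?_⟩
  by_cases hx : x ∈ K
  · exact le_trans (by simpa using hC x hx) (le_max_left _ _)
  · exact le_trans (le_of_lt (hKsub hx)) (le_max_right _ _)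

lemma contDiff_conv {d : ℕ} {F : Type*} [NormedAddCommGroup F] [NormedSpace ℝ F] [CompleteSpace F]
    (ν : Measure (Ed d)) (g : Ed d → ℝ) (hg : Integrable g ν) (n : ℕ) (f : Ed d → F)
    (hf : ContDiff ℝ (n : ℕ∞) f)
    (hb : ∀ i : ℕ, i ≤ n → ∃ C, ∀ x, ‖iteratedFDeriv ℝ i f x‖ ≤ C) :
    ContDiff ℝ (n : ℕ∞) (fun y => ∫ x, g x • f (y - x) ∂ν) := by
  induction n generalizing F with
  | zero =>
    obtain ⟨C, hC⟩ := hb 0 le_rfl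
    simp only [norm_iteratedFDeriv_zero] at hC
    have hcont : Continuous (fun y => ∫ x, g x • f (y - x) ∂ν) := by
      refine continuous_of_dominated (fun y => ?_) (fun y => ?_) (hg.norm.mul_const C) ?_
      · exact hg.aestronglyMeasurable.smul
          ((hf.continuous.comp (continuous_const.sub continuous_id)).aestronglyMeasurable)
      · filter_upwards with x
        rw [norm_smul]
        exact mul_le_mul_of_nonneg_left (hC _) (norm_nonneg _)
      · filter_upwards with x
        exact (hf.continuous.comp (continuous_id.sub continuous_const)).const_smul _
    exact_mod_cast contDiff_zero.mpr hcont
  | succ n IH =>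
    have hC0 : ∃ C, ∀ x, ‖f x‖ ≤ C := by
      obtain ⟨C, hC⟩ := hb 0 (Nat.zero_le _)
      exact ⟨C, fun x => by simpa [norm_iteratedFDeriv_zero] using hC x⟩
    obtain ⟨C0, hC0⟩ := hC0
    obtain ⟨C1, hC1⟩ := hb 1 (by omega)
    have hC1' : ∀ x, ‖fderiv ℝ f x‖ ≤ C1 := by
      intro x
      have := hC1 x
      rwa [← norm_iteratedFDeriv_fderiv, norm_iteratedFDeriv_zero] at this
    have hsucc : Differentiable ℝ f ∧ ContDiff ℝ (n : ℕ∞) (fderiv ℝ f) := by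
      have : ContDiff ℝ ((n : ℕ∞) + 1) f := by exact_mod_cast hf
      obtain ⟨h1, _, h3⟩ := contDiff_succ_iff_fderiv.mp this
      exact ⟨h1, h3⟩
    have hmeas : ∀ y : Ed d, AEStronglyMeasurable (fun x => g x • f (y - x)) ν := fun y =>
      hg.aestronglyMeasurable.smul
        ((hf.continuous.comp (continuous_const.sub continuous_id)).aestronglyMeasurable)
    have hint : ∀ y : Ed d, Integrable (fun x => g x • f (y - x)) ν := by
      intro y
      refine (hg.norm.mul_const C0).mono' (hmeas y) ?_
      filter_upwards with x
      rw [norm_smul]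
      exact mul_le_mul_of_nonneg_left (hC0 _) (norm_nonneg _)
    have key : ∀ y : Ed d, HasFDerivAt (fun y => ∫ x, g x • f (y - x) ∂ν)
        (∫ x, g x • fderiv ℝ f (y - x) ∂ν) y := by
      intro y
      apply hasFDerivAt_integral_of_dominated_of_fderiv_le
        (F' := fun y x => g x • fderiv ℝ f (y - x)) (bound := fun x => ‖g x‖ * C1)
        (Metric.ball_mem_nhds y one_pos)
      · filter_upwards with y' using hmeas y'
      · exact hint y
      · exact hg.aestronglyMeasurable.smul
          (((hsucc.2.continuous).comp (continuous_const.sub continuous_id)).aestronglyMeasurable)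
      · filter_upwards with x y' _
        refine le_trans (ContinuousLinearMap.opNorm_smul_le _ _) ?_
        exact mul_le_mul_of_nonneg_left (hC1' _) (norm_nonneg _)
      · exact hg.norm.mul_const C1
      · filter_upwards with x y' _
        have h1 : HasFDerivAt f (fderiv ℝ f (y' - x)) (y' - x) :=
          (hsucc.1 (y' - x)).hasFDerivAt
        have h2 : HasFDerivAt (fun z : Ed d => z - x) (ContinuousLinearMap.id ℝ (Ed d)) y' :=
          (hasFDerivAt_id y').sub_const x
        have := (h1.comp y' h2).const_smul (g x)
        exact this
    have hd : ContDiff ℝ (n : ℕ∞) (fderiv ℝ (fun y => ∫ x, g x • f (y - x) ∂ν)) := by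
      have heq : fderiv ℝ (fun y => ∫ x, g x • f (y - x) ∂ν)
          = fun y => ∫ x, g x • fderiv ℝ f (y - x) ∂ν := funext fun y => (key y).fderiv
      rw [heq]
      refine IH (fderiv ℝ f) hsucc.2 (fun i hi => ?_)
      obtain ⟨C, hC⟩ := hb (i + 1) (by omega)
      exact ⟨C, fun x => by rw [norm_iteratedFDeriv_fderiv]; exact hC x⟩
    have : ContDiff ℝ ((n : ℕ∞) + 1) (fun y => ∫ x, g x • f (y - x) ∂ν) := by
      rw [contDiff_succ_iff_fderiv]
      exact ⟨fun y => (key y).differentiableAt, by simp, hd⟩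
    exact_mod_cast this



/-- **Statement 15.** Smoothness of the posterior mean: in the additive-noise
model `Y = X + V` with `X ⟂ V`, noise density `f_V ∈ C_0^k(ℝ^d;ℝ)` with a.e.
nonvanishing characteristic function, and `g` measurable and `P_X`-integrable,
the set `U = {y : f_Y(y) > 0}` is open, the ratio `y ↦ N_g(y)/f_Y(y)` is
`k`-times continuously differentiable on `U`, and this ratio is a version of
the posterior mean `E[g(X) | Y]`. -/
theorem tweedie_stmt15 {d k : ℕ} {Ω : Type*} [MeasurableSpace Ω]
    (P : Measure Ω) [IsProbabilityMeasure P]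
    (Y X V : Ω → Ed d)
    (hY : Measurable Y) (hX : Measurable X) (hV : Measurable V)
    (hadd : Y = X + V) (hindep : IndepFun X V P)
    (fV : Ed d → ℝ) (hfV : IsDensity fV)
    (hlaw : Measure.map V P = volume.withDensity fun v => ENNReal.ofReal (fV v))
    (hsm : ContDiff ℝ (k : ℕ∞) fV)
    (hdecay : ∀ n : ℕ, n ≤ k →
      Tendsto (fun x => ‖iteratedFDeriv ℝ n fV x‖) (cocompact (Ed d)) (𝓝 0))
    (hφ : ∀ᵐ ω : Ed d ∂volume, charFn fV ω ≠ 0)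
    (g : Ed d → ℝ) (hg : Measurable g)
    (hgint : Integrable g (Measure.map X P))
    (Ng fY : Ed d → ℝ)
    (hNg : Ng = fun z => ∫ x, g x * fV (z - x) ∂(Measure.map X P))
    (hfY : fY = fun z => ∫ x, fV (z - x) ∂(Measure.map X P)) :
    IsOpen {z : Ed d | 0 < fY z} ∧
    ContDiffOn ℝ (k : ℕ∞) (fun z => Ng z / fY z) {z : Ed d | 0 < fY z} ∧
    P[(fun ω => g (X ω))|MeasurableSpace.comap Y inferInstance]
      =ᵐ[P] fun ω => Ng (Y ω) / fY (Y ω) := by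
  obtain ⟨hfVm, hfVnn, hfVint, hfVone⟩ := hfV
  set ν : Measure (Ed d) := Measure.map X P with hν
  set μV : Measure (Ed d) := Measure.map V P with hμV
  haveI hνP : IsProbabilityMeasure ν := Measure.isProbabilityMeasure_map hX.aemeasurable
  haveI hμVP : IsProbabilityMeasure μV := Measure.isProbabilityMeasure_map hV.aemeasurable
  -- bounds on derivatives
  have hbd : ∀ i : ℕ, i ≤ k → ∃ C, ∀ x, ‖iteratedFDeriv ℝ i fV x‖ ≤ C := by
    intro i hi
    obtain ⟨C, _, hC⟩ := exists_bound_of_cocompact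
      (hsm.continuous_iteratedFDeriv (by exact_mod_cast Nat.cast_le.mpr hi)) (hdecay i hi)
    exact ⟨C, hC⟩
  obtain ⟨C0, hC0nn, hC0⟩ := exists_bound_of_cocompact hsm.continuous
    (by simpa [norm_iteratedFDeriv_zero] using hdecay 0 (Nat.zero_le _))
  -- smoothness of Ng and fY
  have hNgC : ContDiff ℝ (k : ℕ∞) Ng := by
    have := contDiff_conv ν g hgint k fV hsm hbd
    simp only [smul_eq_mul] at this
    rw [hNg]; exact this
  have hfYC : ContDiff ℝ (k : ℕ∞) fY := by
    have := contDiff_conv ν (fun _ => (1 : ℝ)) (integrable_const 1) k fV hsm hbd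
    simp only [one_smul] at this
    rw [hfY]; exact this
  have hfVcont : Continuous fV := hsm.continuous
  refine ⟨isOpen_lt continuous_const hfYC.continuous,
    hNgC.contDiffOn.div hfYC.contDiffOn (fun z hz => ne_of_gt hz), ?_⟩
  -- positivity and vanishing facts
  have hfYnn : ∀ y, 0 ≤ fY y := fun y => by
    rw [hfY]; exact integral_nonneg fun x => hfVnn _
  have htransm : ∀ y : Ed d, AEStronglyMeasurable (fun x => fV (y - x)) ν := fun y =>
    (hfVcont.comp (continuous_const.sub continuous_id)).aestronglyMeasurable
  have htrans : ∀ y : Ed d, Integrable (fun x => fV (y - x)) ν := by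
    intro y
    refine (integrable_const C0).mono' (htransm y) ?_
    filter_upwards with x
    simpa [abs_of_nonneg (hfVnn _)] using hC0 (y - x)
  have hNg0 : ∀ y, fY y = 0 → Ng y = 0 := by
    intro y hy
    have hy' : ∫ x, fV (y - x) ∂ν = 0 := by rw [hfY] at hy; simpa using hy
    have h0 : (fun x => fV (y - x)) =ᵐ[ν] 0 :=
      (integral_eq_zero_iff_of_nonneg (fun x => hfVnn _) (htrans y)).mp hy'
    rw [hNg]
    simp only []
    rw [show (∫ x, g x * fV (y - x) ∂ν) = ∫ x, (0 : ℝ) ∂ν from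
      integral_congr_ae (h0.mono fun x hx => by
        simp only [Pi.zero_apply] at hx; simp [hx]), integral_zero]
  have hNgmul : ∀ y, Ng y / fY y * fY y = Ng y := by
    intro y
    rcases eq_or_lt_of_le (hfYnn y) with h | h
    · rw [← h, mul_zero, hNg0 y h.symm]
    · exact div_mul_cancel₀ _ (ne_of_gt h)
  -- lintegral facts
  have hlint : ∀ y : Ed d, ∫⁻ x, ENNReal.ofReal (fV (y - x)) ∂ν = ENNReal.ofReal (fY y) := by
    intro y
    rw [← ofReal_integral_eq_lintegral_ofReal (htrans y) (Eventually.of_forall fun x => hfVnn _)]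
    rw [hfY]
  have hone : ∀ x : Ed d, ∫⁻ y : Ed d, ENNReal.ofReal (fV (y - x)) = 1 := by
    intro x
    rw [lintegral_sub_right_eq_self (fun y => ENNReal.ofReal (fV y)) x,
      ← ofReal_integral_eq_lintegral_ofReal hfVint (Eventually.of_forall hfVnn), hfVone,
      ENNReal.ofReal_one]
  -- joint law
  have hjoint : Measure.map (fun ω => (X ω, V ω)) P = ν.prod μV :=
    (indepFun_iff_map_prod_eq_prod_map_map hX.aemeasurable hV.aemeasurable).mp hindep
  have haddω : ∀ ω, Y ω = X ω + V ω := fun ω => by rw [hadd]; rfl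
  -- law of Y
  have hmapY : Measure.map Y P = volume.withDensity (fun y => ENNReal.ofReal (fY y)) := by
    ext B hB
    rw [withDensity_apply _ hB, Measure.map_apply hY hB]
    have hYpre : Y ⁻¹' B = (fun ω => (X ω, V ω)) ⁻¹' ((fun p : Ed d × Ed d => p.1 + p.2) ⁻¹' B) := by
      ext ω; simp [haddω ω]
    have hBadd : MeasurableSet ((fun p : Ed d × Ed d => p.1 + p.2) ⁻¹' B) :=
      (measurable_fst.add measurable_snd) hB
    rw [hYpre, ← Measure.map_apply (hX.prodMk hV) hBadd, hjoint, Measure.prod_apply hBadd]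
    have hstep : ∀ x : Ed d, μV (Prod.mk x ⁻¹' ((fun p : Ed d × Ed d => p.1 + p.2) ⁻¹' B))
        = ∫⁻ y : Ed d, B.indicator (fun _ => (1 : ℝ≥0∞)) y * ENNReal.ofReal (fV (y - x)) := by
      intro x
      have hset : (Prod.mk x ⁻¹' ((fun p : Ed d × Ed d => p.1 + p.2) ⁻¹' B))
          = (fun v => x + v) ⁻¹' B := rfl
      rw [hset, hlaw, withDensity_apply _ ((measurable_const_add x) hB),
        ← lintegral_indicator ((measurable_const_add x) hB),
        ← lintegral_add_left_eq_self
          (fun y => B.indicator (fun _ => (1 : ℝ≥0∞)) y * ENNReal.ofReal (fV (y - x))) x]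
      refine lintegral_congr fun v => ?_
      by_cases h : x + v ∈ B <;>
        simp [Set.indicator_apply, h, Set.mem_preimage, add_sub_cancel_left]
    simp_rw [hstep]
    rw [lintegral_lintegral_swap]
    · have : ∀ y : Ed d, ∫⁻ x, B.indicator (fun _ => (1 : ℝ≥0∞)) y
          * ENNReal.ofReal (fV (y - x)) ∂ν
          = B.indicator (fun _ => (1 : ℝ≥0∞)) y * ENNReal.ofReal (fY y) := by
        intro y
        rw [lintegral_const_mul' _ _ (by
          by_cases h : y ∈ B <;> simp [Set.indicator_apply, h]), hlint y]
      simp_rw [this]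
      rw [← lintegral_indicator hB]
      refine lintegral_congr fun y => ?_
      by_cases h : y ∈ B <;> simp [Set.indicator_apply, h]
    · apply AEMeasurable.mul
      · exact ((measurable_one.indicator hB).comp measurable_snd).aemeasurable
      · exact (ENNReal.measurable_ofReal.comp
          (hfVm.comp (measurable_snd.sub measurable_fst))).aemeasurable
  -- nnnorm facts
  have hennV : ∀ t : Ed d, (‖fV t‖₊ : ℝ≥0∞) = ENNReal.ofReal (fV t) := fun t => by
    show ‖fV t‖ₑ = _
    rw [Real.enorm_eq_ofReal_abs, abs_of_nonneg (hfVnn t)]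
  -- integrability of Ng over volume
  have hIntNg : Integrable Ng volume := by
    refine ⟨hNgC.continuous.aestronglyMeasurable, ?_⟩
    rw [hasFiniteIntegral_def]
    have hb1 : ∀ y : Ed d, (‖Ng y‖₊ : ℝ≥0∞)
        ≤ ∫⁻ x, (‖g x‖₊ : ℝ≥0∞) * ENNReal.ofReal (fV (y - x)) ∂ν := by
      intro y
      rw [hNg]
      refine le_trans (enorm_integral_le_lintegral_enorm _) (le_of_eq ?_)
      refine lintegral_congr fun x => ?_
      show (‖g x * fV (y - x)‖₊ : ℝ≥0∞) = _
      rw [nnnorm_mul, ENNReal.coe_mul, hennV]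
    calc ∫⁻ y, (‖Ng y‖₊ : ℝ≥0∞) ∂volume
        ≤ ∫⁻ y, ∫⁻ x, (‖g x‖₊ : ℝ≥0∞) * ENNReal.ofReal (fV (y - x)) ∂ν ∂volume :=
          lintegral_mono hb1
      _ = ∫⁻ x, ∫⁻ y, (‖g x‖₊ : ℝ≥0∞) * ENNReal.ofReal (fV (y - x)) ∂volume ∂ν := by
          refine (lintegral_lintegral_swap ?_).symm
          exact (((hg.comp measurable_fst).nnnorm.coe_nnreal_ennreal).mul
            (ENNReal.measurable_ofReal.comp
              (hfVm.comp (measurable_snd.sub measurable_fst)))).aemeasurable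
      _ = ∫⁻ x, (‖g x‖₊ : ℝ≥0∞) ∂ν := by
          refine lintegral_congr fun x => ?_
          rw [lintegral_const_mul' _ _ ENNReal.coe_ne_top, hone x, mul_one]
      _ < ⊤ := hgint.2
  -- integrability of the ratio composed with Y
  have hratio_meas : Measurable (fun y => Ng y / fY y) :=
    hNgC.continuous.measurable.div hfYC.continuous.measurable
  have hIntRatio : Integrable (fun y => Ng y / fY y) (Measure.map Y P) := by
    rw [hmapY, integrable_withDensity_iff
      (hfYC.continuous.measurable.ennreal_ofReal)
      (Eventually.of_forall fun x => ENNReal.ofReal_lt_top)]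
    refine hIntNg.congr (Eventually.of_forall fun y => ?_)
    show Ng y = Ng y / fY y * (ENNReal.ofReal (fY y)).toReal
    rw [ENNReal.toReal_ofReal (hfYnn y)]
    exact (hNgmul y).symm
  have hIntRatioY : Integrable (fun ω => Ng (Y ω) / fY (Y ω)) P :=
    (integrable_map_measure hratio_meas.aestronglyMeasurable hY.aemeasurable).mp hIntRatio
  -- integrability of g ∘ X
  have hgXint : Integrable (fun ω => g (X ω)) P :=
    (integrable_map_measure hg.aestronglyMeasurable hX.aemeasurable).mp hgint
  -- the key set-integral identity
  have hkey : ∀ B : Set (Ed d), MeasurableSet B →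
      ∫ ω in Y ⁻¹' B, g (X ω) ∂P = ∫ y in B, Ng y ∂volume := by
    intro B hB
    set G : Ed d × Ed d → ℝ := fun p => B.indicator (fun _ => (1 : ℝ)) (p.1 + p.2) * g p.1
      with hG
    have hGm : Measurable G :=
      ((measurable_const.indicator hB).comp (measurable_fst.add measurable_snd)).mul
        (hg.comp measurable_fst)
    have hGint : Integrable G (ν.prod μV) := by
      refine ⟨hGm.aestronglyMeasurable, ?_⟩
      rw [hasFiniteIntegral_def]
      calc ∫⁻ p, (‖G p‖₊ : ℝ≥0∞) ∂(ν.prod μV)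
          ≤ ∫⁻ p : Ed d × Ed d, (‖g p.1‖₊ : ℝ≥0∞) ∂(ν.prod μV) := by
            refine lintegral_mono fun p => ?_
            rw [hG]
            by_cases h : p.1 + p.2 ∈ B <;> simp [Set.indicator_apply, h]
        _ = ∫⁻ x, (‖g x‖₊ : ℝ≥0∞) ∂ν := by
            rw [← lintegral_map (hg.nnnorm.coe_nnreal_ennreal) measurable_fst,
              Measure.map_fst_prod]
            simp [measure_univ]
        _ < ⊤ := hgint.2
    have hswap : Integrable (Function.uncurry fun x y => g x * fV (y - x))
        (ν.prod (volume.restrict B)) := by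
      refine ⟨((hg.comp measurable_fst).mul
        (hfVm.comp (measurable_snd.sub measurable_fst))).aestronglyMeasurable, ?_⟩
      rw [hasFiniteIntegral_def]
      have hm1 : Measurable fun p : Ed d × Ed d => (‖g p.1 * fV (p.2 - p.1)‖₊ : ℝ≥0∞) :=
        ((hg.comp measurable_fst).mul
          (hfVm.comp (measurable_snd.sub measurable_fst))).nnnorm.coe_nnreal_ennreal
      show (∫⁻ p : Ed d × Ed d, (‖g p.1 * fV (p.2 - p.1)‖₊ : ℝ≥0∞)
        ∂(ν.prod (volume.restrict B))) < ⊤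
      calc ∫⁻ p : Ed d × Ed d, (‖g p.1 * fV (p.2 - p.1)‖₊ : ℝ≥0∞)
            ∂(ν.prod (volume.restrict B))
          = ∫⁻ x, ∫⁻ y in B, (‖g x * fV (y - x)‖₊ : ℝ≥0∞) ∂volume ∂ν :=
            lintegral_prod _ hm1.aemeasurable
        _ ≤ ∫⁻ x, (‖g x‖₊ : ℝ≥0∞) ∂ν := by
            refine lintegral_mono fun x => ?_
            calc ∫⁻ y in B, (‖g x * fV (y - x)‖₊ : ℝ≥0∞) ∂volume
                ≤ ∫⁻ y, (‖g x * fV (y - x)‖₊ : ℝ≥0∞) ∂volume :=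
                  lintegral_mono' Measure.restrict_le_self le_rfl
              _ = (‖g x‖₊ : ℝ≥0∞) * ∫⁻ y, ENNReal.ofReal (fV (y - x)) ∂volume := by
                  rw [← lintegral_const_mul' _ _ ENNReal.coe_ne_top]
                  refine lintegral_congr fun y => ?_
                  rw [nnnorm_mul, ENNReal.coe_mul, hennV]
              _ = (‖g x‖₊ : ℝ≥0∞) := by rw [hone x, mul_one]
        _ < ⊤ := hgint.2
    calc ∫ ω in Y ⁻¹' B, g (X ω) ∂P
        = ∫ ω, (Y ⁻¹' B).indicator (fun ω => g (X ω)) ω ∂P := (integral_indicator (hY hB)).symm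
      _ = ∫ ω, G (X ω, V ω) ∂P := by
          refine integral_congr_ae (Eventually.of_forall fun ω => ?_)
          have h' := haddω ω
          rw [hG]
          by_cases h : X ω + V ω ∈ B <;>
            simp [Set.indicator_apply, h, h', Set.mem_preimage]
      _ = ∫ p, G p ∂(ν.prod μV) := by
          rw [← hjoint]
          exact (integral_map (hX.prodMk hV).aemeasurable hGm.aestronglyMeasurable).symm
      _ = ∫ x, ∫ v, G (x, v) ∂μV ∂ν := integral_prod G hGint
      _ = ∫ x, (∫ y in B, fV (y - x) ∂volume) * g x ∂ν := by
          refine integral_congr_ae (Eventually.of_forall fun x => ?_)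
          show ∫ v, B.indicator (fun _ => (1 : ℝ)) (x + v) * g x ∂μV
              = (∫ y in B, fV (y - x) ∂volume) * g x
          rw [integral_mul_const]
          congr 1
          have h1 : ∫ v, B.indicator (fun _ => (1 : ℝ)) (x + v) ∂μV
              = ∫ v, B.indicator (fun _ => (1 : ℝ)) (x + v) * fV v ∂volume := by
            rw [hlaw]
            have hof : (fun v => ENNReal.ofReal (fV v))
                = fun v => ((Real.toNNReal (fV v) : ℝ≥0) : ℝ≥0∞) := rfl
            rw [hof, integral_withDensity_eq_integral_smul
              hfVm.real_toNNReal]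
            refine integral_congr_ae (Eventually.of_forall fun v => ?_)
            show (fV v).toNNReal • B.indicator (fun _ => (1 : ℝ)) (x + v)
              = B.indicator (fun _ => (1 : ℝ)) (x + v) * fV v
            rw [NNReal.smul_def, smul_eq_mul, Real.coe_toNNReal _ (hfVnn v), mul_comm]
          have h2 := integral_add_left_eq_self (μ := volume)
            (fun y => B.indicator (fun _ => (1 : ℝ)) y * fV (y - x)) x
          calc ∫ v, B.indicator (fun _ => (1 : ℝ)) (x + v) ∂μV
              = ∫ v, B.indicator (fun _ => (1 : ℝ)) (x + v) * fV v ∂volume := h1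
            _ = ∫ v, B.indicator (fun _ => (1 : ℝ)) (x + v) * fV (x + v - x) ∂volume := by
                refine integral_congr_ae (Eventually.of_forall fun v => ?_)
                simp [add_sub_cancel_left]
            _ = ∫ y, B.indicator (fun _ => (1 : ℝ)) y * fV (y - x) ∂volume := h2
            _ = ∫ y in B, fV (y - x) ∂volume := by
                rw [← integral_indicator hB]
                refine integral_congr_ae (Eventually.of_forall fun y => ?_)
                by_cases h : y ∈ B <;> simp [Set.indicator_apply, h]
      _ = ∫ x, ∫ y in B, g x * fV (y - x) ∂volume ∂ν := by
          refine integral_congr_ae (Eventually.of_forall fun x => ?_)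
          show (∫ y in B, fV (y - x) ∂volume) * g x = ∫ y in B, g x * fV (y - x) ∂volume
          rw [mul_comm]
          exact (integral_const_mul (g x) _).symm
      _ = ∫ y in B, ∫ x, g x * fV (y - x) ∂ν ∂volume := integral_integral_swap hswap
      _ = ∫ y in B, Ng y ∂volume := by rw [hNg]
  -- conclude via uniqueness of conditional expectation
  have hm : MeasurableSpace.comap Y inferInstance ≤ (inferInstance : MeasurableSpace Ω) :=
    hY.comap_le
  haveI : IsFiniteMeasure (P.trim hm) := isFiniteMeasure_trim hm
  refine (ae_eq_condExp_of_forall_setIntegral_eq hm hgXint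
    (fun s _ _ => hIntRatioY.integrableOn) ?_ ?_).symm
  · intro s hs _
    obtain ⟨B, hB, rfl⟩ := MeasurableSpace.measurableSet_comap.mp hs
    calc ∫ ω in Y ⁻¹' B, Ng (Y ω) / fY (Y ω) ∂P
        = ∫ y in B, Ng y / fY y ∂(Measure.map Y P) :=
          (setIntegral_map hB hratio_meas.aestronglyMeasurable hY.aemeasurable).symm
      _ = ∫ y in B, Ng y ∂volume := by
          rw [hmapY, restrict_withDensity hB]
          have hof : (fun y => ENNReal.ofReal (fY y))
              = fun y => ((Real.toNNReal (fY y) : ℝ≥0) : ℝ≥0∞) := rfl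
          rw [hof, integral_withDensity_eq_integral_smul
            hfYC.continuous.measurable.real_toNNReal]
          refine integral_congr_ae (Eventually.of_forall fun y => ?_)
          show (fY y).toNNReal • (Ng y / fY y) = Ng y
          rw [NNReal.smul_def, smul_eq_mul, Real.coe_toNNReal _ (hfYnn y), mul_comm, hNgmul y]
      _ = ∫ ω in Y ⁻¹' B, g (X ω) ∂P := (hkey B hB).symm
  · refine ⟨fun ω => Ng (Y ω) / fY (Y ω), ?_, EventuallyEq.rfl⟩
    exact (hratio_meas.comp (Measurable.of_comap_le le_rfl)).stronglyMeasurable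


end
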